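/- Let n be a positive integer and let D, S be n×n complex matrices with S·conj(S) = −1 and S·conj(D) = D·S. Then the determinant of D is a real number and det D ≥ 0. -/

import Mathlib

open Matrix Polynomial Module

/-- β = 4 positivity: a quaternionic structure (`S conj(S) = -1`, `S conj(D) = D S`)
forces `det D` to be real and nonnegative. -/

lemma multiset_prod_nonneg_of_conj_invariant :
    ∀ (M : Multiset ℂ), (∀ z, M.count z = M.count ((starRingEnd ℂ) z)) →
    (∀ r : ℝ, Even (M.count ((r : ℂ)))) → ∃ t : ℝ, M.prod = (t : ℂ) ∧ 0 ≤ t := by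
  intro M
  induction M using Multiset.strongInductionOn with
  | _ M ih =>
    intro hc he
    rcases Multiset.empty_or_exists_mem M with rfl | ⟨a, ha⟩
    · exact ⟨1, by simp, zero_le_one⟩
    by_cases him : a.im = 0
    · -- a real
      have hareal : ((a.re : ℂ)) = a := Complex.ext rfl him.symm
      have hconja : (starRingEnd ℂ) a = a := Complex.conj_eq_iff_im.mpr him
      have h2 : 2 ≤ M.count a := by
        have h1 : 0 < M.count a := Multiset.count_pos.mpr ha
        have := he a.re
        rw [hareal] at this
        obtain ⟨m, hm⟩ := this
        omega
      have ha' : a ∈ M.erase a := by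
        rw [← Multiset.count_pos, Multiset.count_erase_self]; omega
      set M' := (M.erase a).erase a with hM'
      have hM : M = a ::ₘ a ::ₘ M' := by
        rw [hM', Multiset.cons_erase ha', Multiset.cons_erase ha]
      have hcnt : ∀ z, M.count z = M'.count z + (if z = a then 2 else 0) := by
        intro z
        rw [hM]
        by_cases hz : z = a <;> simp [Multiset.count_cons, hz]
      have hzc : ∀ z : ℂ, (starRingEnd ℂ) z = a ↔ z = a := by
        intro z
        constructor
        · intro h
          have := congrArg (starRingEnd ℂ) h
          rwa [Complex.conj_conj, hconja] at this
        · intro h; rw [h, hconja]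
      have hc' : ∀ z, M'.count z = M'.count ((starRingEnd ℂ) z) := by
        intro z
        have h1 := hc z
        rw [hcnt z, hcnt ((starRingEnd ℂ) z)] at h1
        by_cases hz : z = a
        · subst hz; rw [hconja]
        · rw [if_neg hz, if_neg ((not_congr (hzc z)).mpr hz)] at h1; omega
      have he' : ∀ r : ℝ, Even (M'.count ((r : ℂ))) := by
        intro r
        have h1 := he r
        rw [hcnt ((r : ℂ))] at h1
        by_cases hz : ((r : ℂ)) = a
        · rw [if_pos hz] at h1
          rcases h1 with ⟨m, hm⟩
          exact ⟨m - 1, by omega⟩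
        · rwa [if_neg hz, add_zero] at h1
      have hlt : M' < M := lt_of_le_of_lt (Multiset.erase_le a _) (Multiset.erase_lt.mpr ha)
      obtain ⟨t, ht, ht0⟩ := ih M' hlt hc' he'
      refine ⟨a.re ^ 2 * t, ?_, by positivity⟩
      rw [hM]
      simp only [Multiset.prod_cons, ht]
      conv_lhs => rw [← hareal]
      push_cast
      ring
    · -- a not real
      have hconja : (starRingEnd ℂ) a ≠ a := fun h => him (Complex.conj_eq_iff_im.mp h)
      have hb : (starRingEnd ℂ) a ∈ M.erase a := by
        rw [← Multiset.count_pos, Multiset.count_erase_of_ne hconja, ← hc]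
        exact Multiset.count_pos.mpr ha
      set M' := (M.erase a).erase ((starRingEnd ℂ) a) with hM'
      have hM : M = a ::ₘ (starRingEnd ℂ) a ::ₘ M' := by
        rw [hM', Multiset.cons_erase hb, Multiset.cons_erase ha]
      have hcnt : ∀ z, M.count z = M'.count z + (if z = a then 1 else 0)
          + (if z = (starRingEnd ℂ) a then 1 else 0) := by
        intro z
        rw [hM]
        by_cases hz : z = a <;> by_cases hz' : z = (starRingEnd ℂ) a <;>
          simp [Multiset.count_cons, hz, hz'] <;> omega
      have hc' : ∀ z, M'.count z = M'.count ((starRingEnd ℂ) z) := by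
        intro z
        have h1 := hc z
        rw [hcnt z, hcnt ((starRingEnd ℂ) z)] at h1
        have e1 : (starRingEnd ℂ) z = a ↔ z = (starRingEnd ℂ) a := by
          constructor
          · intro h; rw [← h, Complex.conj_conj]
          · intro h; rw [h, Complex.conj_conj]
        have e2 : (starRingEnd ℂ) z = (starRingEnd ℂ) a ↔ z = a :=
          ⟨fun h => (starRingEnd ℂ).injective h, fun h => by rw [h]⟩
        by_cases hz : z = a <;> by_cases hz' : z = (starRingEnd ℂ) a
        · rw [if_pos hz, if_pos hz', if_pos (e1.mpr hz'), if_pos (e2.mpr hz)] at h1; omega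
        · rw [if_pos hz, if_neg hz', if_neg (fun h => hz' (e1.mp h)), if_pos (e2.mpr hz)] at h1
          omega
        · rw [if_neg hz, if_pos hz', if_pos (e1.mpr hz'), if_neg (fun h => hz (e2.mp h))] at h1
          omega
        · rw [if_neg hz, if_neg hz', if_neg (fun h => hz' (e1.mp h)),
            if_neg (fun h => hz (e2.mp h))] at h1
          omega
      have he' : ∀ r : ℝ, Even (M'.count ((r : ℂ))) := by
        intro r
        have h1 := he r
        have hra : ((r : ℂ)) ≠ a := fun h => him (by rw [← h]; simp)
        have hra' : ((r : ℂ)) ≠ (starRingEnd ℂ) a := by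
          intro h
          apply him
          have := congrArg Complex.im h
          simpa using this.symm
        rwa [hcnt ((r : ℂ)), if_neg hra, if_neg hra', add_zero, add_zero] at h1
      have hlt : M' < M := lt_of_le_of_lt (Multiset.erase_le _ _) (Multiset.erase_lt.mpr ha)
      obtain ⟨t, ht, ht0⟩ := ih M' hlt hc' he'
      refine ⟨Complex.normSq a * t, ?_, mul_nonneg (Complex.normSq_nonneg a) ht0⟩
      rw [hM]
      simp only [Multiset.prod_cons, ht]
      rw [← mul_assoc, Complex.mul_conj]
      push_cast
      ring




section
open Module Submodule

lemma even_finrank_of_antilinear_aux :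
    ∀ (k : ℕ) (V : Type) [AddCommGroup V] [Module ℂ V] [FiniteDimensional ℂ V],
    finrank ℂ V = k →
    ∀ (J : V → V), (∀ x y, J (x + y) = J x + J y) →
    (∀ (c : ℂ) (x : V), J (c • x) = (starRingEnd ℂ) c • J x) →
    (∀ x, J (J x) = -x) → Even k := by
  intro k
  induction k using Nat.strong_induction_on with
  | _ k ih =>
    intro V _ _ _ hrank J hadd hsm hJJ
    rcases Nat.eq_zero_or_pos k with rfl | hk
    · exact Even.zero
    have : Nontrivial V := by
      rw [← Module.finrank_pos_iff (R := ℂ)]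
      omega
    obtain ⟨v, hv⟩ := exists_ne (0 : V)
    have hJneg : ∀ x : V, J (-x) = -J x := by
      intro x
      have := hsm (-1) x
      simpa using this
    have hJsub : ∀ x y : V, J (x - y) = J x - J y := by
      intro x y
      rw [sub_eq_add_neg, hadd, hJneg, sub_eq_add_neg]
    -- v and J v are linearly independent
    have hli : LinearIndependent ℂ ![v, J v] := by
      rw [LinearIndependent.pair_iff]
      intro s t hst
      by_cases ht : t = 0
      · subst ht
        simp only [smul_zero, zero_smul, add_zero] at hst
        exact ⟨by simpa [hv] using smul_eq_zero.mp hst, rfl⟩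
      · exfalso
        have hJv : J v = (-(s/t)) • v := by
          have h1 : t • J v = (-s) • v := by
            rw [neg_smul]
            exact eq_neg_of_add_eq_zero_right hst
          have h2 : J v = (t⁻¹ * (-s)) • v := by
            rw [mul_smul, ← h1, inv_smul_smul₀ ht]
          rw [h2]
          congr 1
          field_simp
        have := hJJ v
        rw [hJv, hsm, hJv, smul_smul] at this
        have h1 : ((starRingEnd ℂ) (-(s/t)) * -(s/t) + 1) • v = 0 := by
          rw [add_smul, one_smul, this]
          simp
        have h2 : (starRingEnd ℂ) (-(s/t)) * -(s/t) + 1 ≠ 0 := by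
          have : (starRingEnd ℂ) (-(s/t)) * -(s/t) = (Complex.normSq (-(s/t)) : ℂ) := by
            rw [mul_comm, Complex.mul_conj]
          rw [this]
          intro h
          have h' : Complex.normSq (-(s/t)) + 1 = 0 := by exact_mod_cast h
          nlinarith [Complex.normSq_nonneg (-(s/t))]
        exact hv ((smul_eq_zero.mp h1).resolve_left h2)
    set W : Submodule ℂ V := span ℂ {v, J v} with hW
    have hrange : Set.range ![v, J v] = {v, J v} := by
      simp [Matrix.range_cons, Matrix.range_empty, Set.pair_comm]
    have hWrank : finrank ℂ W = 2 := by
      rw [hW, ← hrange, finrank_span_eq_card hli]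
      simp
    have hJW : ∀ x ∈ W, J x ∈ W := by
      intro x hx
      induction hx using Submodule.span_induction with
      | mem y hy =>
        rcases hy with rfl | rfl
        · exact subset_span (by simp)
        · rw [hJJ]
          exact neg_mem (subset_span (by simp))
      | zero =>
        have : J 0 = 0 := by
          have := hsm 0 0
          simpa using this
        rw [this]; exact zero_mem _
      | add y z _ _ hy hz => rw [hadd]; exact add_mem hy hz
      | smul c y _ hy => rw [hsm]; exact smul_mem _ _ hy
    -- quotient
    set Q := V ⧸ W with hQ
    have hker : ∀ a b : V, a - b ∈ W → Submodule.Quotient.mk (p := W) (J a) = Submodule.Quotient.mk (J b) := by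
      intro a b h
      rw [Submodule.Quotient.eq]
      rw [← hJsub]
      exact hJW _ h
    set J' : Q → Q := fun q => Quotient.liftOn' q
      (fun x => Submodule.Quotient.mk (J x))
      (fun a b h => hker a b ((Submodule.quotientRel_def W).mp h)) with hJ'
    have hmk : ∀ x : V, J' (Submodule.Quotient.mk x) = Submodule.Quotient.mk (J x) := fun x => rfl
    have hsurj := Submodule.Quotient.mk_surjective W
    have hadd' : ∀ x y : Q, J' (x + y) = J' x + J' y := by
      intro x y
      obtain ⟨a, rfl⟩ := hsurj x
      obtain ⟨b, rfl⟩ := hsurj y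
      rw [← Submodule.Quotient.mk_add, hmk, hmk, hmk, hadd, Submodule.Quotient.mk_add]
    have hsm' : ∀ (c : ℂ) (x : Q), J' (c • x) = (starRingEnd ℂ) c • J' x := by
      intro c x
      obtain ⟨a, rfl⟩ := hsurj x
      rw [← Submodule.Quotient.mk_smul, hmk, hmk, hsm, Submodule.Quotient.mk_smul]
    have hJJ' : ∀ x : Q, J' (J' x) = -x := by
      intro x
      obtain ⟨a, rfl⟩ := hsurj x
      rw [hmk, hmk, hJJ, Submodule.Quotient.mk_neg]
    have hsum : finrank ℂ Q + finrank ℂ W = k := by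
      rw [← hrank]
      exact Submodule.finrank_quotient_add_finrank W
    have hQrank : finrank ℂ Q = k - 2 := by omega
    have hlt : k - 2 < k := by omega
    have := ih (k - 2) hlt Q hQrank J' hadd' hsm' hJJ'
    obtain ⟨m, hm⟩ := this
    exact ⟨m + 1, by omega⟩

end




variable {n : ℕ}

lemma charpoly_conj_eq (T S A : Matrix (Fin n) (Fin n) ℂ) (hTS : T * S = 1) :
    (T * A * S).charpoly = A.charpoly := by
  have hmap : ∀ M : Matrix (Fin n) (Fin n) ℂ,
      (C : ℂ →+* ℂ[X]).mapMatrix M = M.map C := fun M => rfl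
  have key : charmatrix (T * A * S) =
      (T.map C) * charmatrix A * (S.map C) := by
    rw [charmatrix]
    rw [charmatrix]
    rw [Matrix.mul_sub, Matrix.sub_mul]
    congr 1
    · -- scalar part
      have h1 : T.map C * (scalar (Fin n)) X = (scalar (Fin n)) X * T.map C :=
        (scalar_commute X (fun r' => commute_X r') (T.map C)).symm
      rw [h1, Matrix.mul_assoc, ← Matrix.map_mul, hTS, Matrix.map_one _ (map_zero C) (map_one C),
        Matrix.mul_one]
    · rw [RingHom.mapMatrix_apply, RingHom.mapMatrix_apply, ← Matrix.map_mul, ← Matrix.map_mul]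
  rw [Matrix.charpoly, key, det_mul, det_mul, Matrix.charpoly]
  have : T.map C * S.map C = 1 := by
    rw [← Matrix.map_mul, hTS, Matrix.map_one _ (map_zero C) (map_one C)]
  calc (T.map C).det * (charmatrix A).det * (S.map C).det
      = (charmatrix A).det * ((T.map C) * (S.map C)).det := by rw [det_mul]; ring
    _ = (charmatrix A).det := by rw [this, det_one, mul_one]

lemma charpoly_shift (M : Matrix (Fin n) (Fin n) ℂ) (r : ℂ) :
    (M.charpoly).comp (X + C r) = (M - r • 1).charpoly := by
  have h1 : (M.charpoly).comp (X + C r) = aeval (X + C r) M.charpoly := comp_eq_aeval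
  rw [h1, Matrix.charpoly,
    show ((aeval (X + C r)) M.charmatrix.det) = (M.charmatrix.map (aeval (X + C r))).det from
      RingHom.map_det ((aeval (X + C r)).toRingHom : ℂ[X] →+* ℂ[X]) M.charmatrix,
    Matrix.charpoly]
  congr 1
  ext i j : 2
  by_cases hij : i = j
  · subst hij
    simp only [Matrix.map_apply, charmatrix_apply_eq, Matrix.sub_apply, Matrix.smul_apply,
      Matrix.one_apply_eq, smul_eq_mul, mul_one, map_sub, aeval_X, Polynomial.algebraMap_eq,
      map_add, C_sub, aeval_C]
    ring
  · simp only [Matrix.map_apply, charmatrix_apply_ne _ _ _ hij, Matrix.sub_apply,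
      Matrix.smul_apply, Matrix.one_apply_ne hij, smul_eq_mul, mul_zero, sub_zero, map_neg,
      Polynomial.algebraMap_eq, aeval_C]




variable {n : ℕ}

lemma star_mulVec' (M : Matrix (Fin n) (Fin n) ℂ) (u : Fin n → ℂ) :
    star (M.mulVec u) = (M.map (starRingEnd ℂ)).mulVec (star u) := by
  ext i
  simp only [Pi.star_apply, Matrix.mulVec, dotProduct, Matrix.map_apply, starRingEnd_apply]
  rw [star_sum]
  exact Finset.sum_congr rfl fun j _ => by rw [star_mul']

lemma matrix_charpoly_toLin' (E : Matrix (Fin n) (Fin n) ℂ) :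
    (Matrix.toLin' E).charpoly = E.charpoly := by
  conv_rhs => rw [← LinearMap.toMatrix'_toLin' E]
  rw [← LinearMap.toMatrix_eq_toMatrix', LinearMap.charpoly_toMatrix]



lemma even_rootMultiplicity (D S : Matrix (Fin n) (Fin n) ℂ)
    (hS : S * S.map (starRingEnd ℂ) = -1)
    (hSD : S * D.map (starRingEnd ℂ) = D * S) (r : ℝ) :
    Even ((Matrix.charpoly D).rootMultiplicity ((r : ℂ))) := by
  rw [rootMultiplicity_eq_natTrailingDegree, charpoly_shift D ((r : ℂ)),
    ← matrix_charpoly_toLin', ← LinearMap.finrank_maxGenEigenspace_zero_eq]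
  set f : Module.End ℂ (Fin n → ℂ) := Matrix.toLin' D with hf
  set g : Module.End ℂ (Fin n → ℂ) := f - (r : ℂ) • 1 with hg
  have hE : (Matrix.toLin' (D - (r : ℂ) • 1) : Module.End ℂ (Fin n → ℂ)) = g := by
    rw [hg, hf]
    rw [map_sub, _root_.map_smul, Matrix.toLin'_one]
    rfl
  have hspace : Module.End.maxGenEigenspace (Matrix.toLin' (D - (r : ℂ) • 1)) 0
      = Module.End.maxGenEigenspace f ((r : ℂ)) := by
    rw [hE]
    ext m
    rw [Module.End.mem_maxGenEigenspace, Module.End.mem_maxGenEigenspace]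
    simp only [zero_smul, sub_zero, hg]
  rw [hspace]
  set V := Module.End.maxGenEigenspace f ((r : ℂ)) with hV
  -- commutation of g with the antilinear map w ↦ S ⬝ star w
  have hcomm : ∀ w : Fin n → ℂ,
      g (S.mulVec (star w)) = S.mulVec (star (g w)) := by
    intro w
    have h1 : f (S.mulVec (star w)) = S.mulVec (star (f w)) := by
      show Matrix.toLin' D (S.mulVec (star w)) = S.mulVec (star (Matrix.toLin' D w))
      rw [Matrix.toLin'_apply, Matrix.toLin'_apply, Matrix.mulVec_mulVec, ← hSD,
        ← Matrix.mulVec_mulVec, ← star_mulVec']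
    have h2 : star ((r : ℂ) • w) = (r : ℂ) • star w := by
      rw [star_smul]
      congr 1
      rw [← starRingEnd_apply]
      exact Complex.conj_ofReal r
    rw [hg]
    simp only [LinearMap.sub_apply, LinearMap.smul_apply, Module.End.one_apply]
    rw [h1, star_sub, h2, Matrix.mulVec_sub, Matrix.mulVec_smul]
  have hpow : ∀ (k : ℕ) (w : Fin n → ℂ),
      (g ^ k) (S.mulVec (star w)) = S.mulVec (star ((g ^ k) w)) := by
    intro k
    induction k with
    | zero => intro w; simp
    | succ k ihk =>
      intro w
      rw [pow_succ, Module.End.mul_apply, Module.End.mul_apply, hcomm, ihk]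
  -- the antilinear map on V
  have hmem : ∀ x : Fin n → ℂ, x ∈ V → S.mulVec (star x) ∈ V := by
    intro x hx
    rw [hV, Module.End.mem_maxGenEigenspace] at hx ⊢
    obtain ⟨k, hk⟩ := hx
    refine ⟨k, ?_⟩
    have he : ((f - (r : ℂ) • 1) ^ k) = g ^ k := rfl
    rw [he] at hk ⊢
    rw [hpow k, hk]
    simp
  set J : V → V := fun x => ⟨S.mulVec (star (x : Fin n → ℂ)), hmem x.1 x.2⟩ with hJ
  have hadd : ∀ x y : V, J (x + y) = J x + J y := by
    intro x y
    apply Subtype.ext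
    simp only [hJ, Submodule.coe_add, star_add, Matrix.mulVec_add]
  have hsm : ∀ (c : ℂ) (x : V), J (c • x) = (starRingEnd ℂ) c • J x := by
    intro c x
    apply Subtype.ext
    simp only [hJ, SetLike.val_smul, star_smul, Matrix.mulVec_smul, starRingEnd_apply]
  have hJJ : ∀ x : V, J (J x) = -x := by
    intro x
    apply Subtype.ext
    simp only [hJ, Submodule.coe_neg]
    rw [star_mulVec', star_star, Matrix.mulVec_mulVec, hS, Matrix.neg_mulVec,
      Matrix.one_mulVec]
  exact even_finrank_of_antilinear_aux (finrank ℂ V) V rfl J hadd hsm hJJ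


theorem stmt5 (n : ℕ) (hn : 0 < n) (D S : Matrix (Fin n) (Fin n) ℂ)
    (hS : S * S.map (starRingEnd ℂ) = -1)
    (hSD : S * D.map (starRingEnd ℂ) = D * S) :
    ∃ r : ℝ, D.det = (r : ℂ) ∧ 0 ≤ r := by
  classical
  set p := D.charpoly with hp
  set T : Matrix (Fin n) (Fin n) ℂ := -(S.map (starRingEnd ℂ)) with hT
  have hS' : S.map (starRingEnd ℂ) * S = -1 := by
    have := congrArg (fun M : Matrix (Fin n) (Fin n) ℂ => M.map (starRingEnd ℂ)) hS
    simp only [Matrix.map_mul] at this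
    have hinv : (S.map (starRingEnd ℂ)).map (starRingEnd ℂ) = S := by
      rw [Matrix.map_map]
      convert Matrix.map_id S
      ext z
      exact Complex.conj_conj z
    rw [hinv] at this
    rw [this]
    ext i j
    simp [Matrix.map_apply, Matrix.neg_apply, Matrix.one_apply]
  have hTS : T * S = 1 := by rw [hT, Matrix.neg_mul, hS', neg_neg]
  have hST : S * T = 1 := by rw [hT, Matrix.mul_neg, hS, neg_neg]
  have hDconj : D.map (starRingEnd ℂ) = T * D * S := by
    have := congrArg (fun M => T * M) hSD
    rw [← Matrix.mul_assoc, hTS, Matrix.one_mul] at this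
    rw [this, Matrix.mul_assoc]
  have hpconj : p.map (starRingEnd ℂ) = p := by
    rw [hp, ← Matrix.charpoly_map, hDconj, charpoly_conj_eq T S D hTS]
  have hsplits : p.Splits := IsAlgClosed.splits p
  have hroots : p.roots.map (starRingEnd ℂ) = p.roots := by
    rw [← hsplits.roots_map (starRingEnd ℂ), hpconj]
  have hc : ∀ z : ℂ, p.roots.count z = p.roots.count ((starRingEnd ℂ) z) := by
    intro z
    conv_lhs => rw [← hroots,
      show z = (starRingEnd ℂ) ((starRingEnd ℂ) z) from (Complex.conj_conj z).symm]
    rw [Multiset.count_map_eq_count' _ _ (starRingEnd ℂ).injective]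
  have he : ∀ r : ℝ, Even (p.roots.count ((r : ℂ))) := by
    intro r
    rw [Polynomial.count_roots]
    exact even_rootMultiplicity D S hS hSD r
  obtain ⟨t, ht, ht0⟩ := multiset_prod_nonneg_of_conj_invariant p.roots hc he
  exact ⟨t, by rw [Matrix.det_eq_prod_roots_charpoly, ← hp, ht], ht0⟩
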